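/- arXiv:2510.07264 — 4 statements merged into one kernel-verified Lean document; each statement's English description precedes it below -/
import Mathlib

section
/- Let a > 0, B > 0, A > 0, b ∈ ℝ, and let G : ℝ → ℂ be a bounded measurable function. Then ∫_ℝ e^{−A(ay+b)²}/(B·√|ay+b|) · G(y) dy = (Γ(1/4)/(2 a A^{1/4} B)) · ∫_0^∞ f(u)·[ G((−√u − b)/a) + G((√u − b)/a) ] du, where f(u) = (A^{1/4}/Γ(1/4))·u^{−3/4}·e^{−Au} is the probability density of the Gamma distribution with shape 1/4 and rate A. Consequently, | ∫_ℝ e^{−A(ay+b)²}/(B·√|ay+b|) · G(y) dy | ≤ (Γ(1/4)·A^{−1/4}/(a B))·sup_{y∈ℝ} |G(y)|. -/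
open MeasureTheory Real Set

section Aux

variable {a b A B : ℝ}

/-- Pointwise coefficient identity for the substitution `u = x²`. -/
lemma gamma_samples_coeff (hB : 0 < B) {x : ℝ} (hx : 0 < x) :
    |(2:ℝ)| * x ^ ((2:ℝ) - 1) *
      (1 / (2 * B) * (x ^ (2:ℝ)) ^ (-(3:ℝ)/4) * Real.exp (-A * x ^ (2:ℝ)))
      = Real.exp (-A * x ^ 2) / (B * Real.sqrt |x|) := by
  have h2 : x ^ (2:ℝ) = x ^ 2 := by
    rw [show (2:ℝ) = ((2:ℕ):ℝ) by norm_num, Real.rpow_natCast]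
  have h34 : (x ^ (2:ℝ)) ^ (-(3:ℝ)/4) = x ^ (-(3:ℝ)/2) := by
    rw [← Real.rpow_mul hx.le]
    norm_num
  have hxa : x ^ ((2:ℝ)-1) * x ^ (-(3:ℝ)/2) = x ^ (-(1:ℝ)/2) := by
    rw [← Real.rpow_add hx]; norm_num
  have hxb : x ^ (-(1:ℝ)/2) = (x ^ ((1:ℝ)/2))⁻¹ := by
    rw [← Real.rpow_neg hx.le]; norm_num
  have hs : Real.sqrt |x| = x ^ ((1:ℝ)/2) := by
    rw [abs_of_pos hx, Real.sqrt_eq_rpow]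
  have hpos : (0:ℝ) < x ^ ((1:ℝ)/2) := Real.rpow_pos_of_pos hx _
  have hx3 : x ^ ((2:ℝ)-1) * x ^ (-(3:ℝ)/2) * x ^ ((1:ℝ)/2) = 1 := by
    rw [← Real.rpow_add hx, ← Real.rpow_add hx]
    norm_num
  have hB2 : 2 * B * (1/(2*B)) = 1 := by field_simp
  rw [h34, h2, hs, abs_two,
    eq_div_iff (by positivity : B * x ^ ((1:ℝ)/2) ≠ 0)]
  calc 2 * x ^ ((2:ℝ)-1) * (1 / (2 * B) * x ^ (-(3:ℝ)/2) * Real.exp (-A * x ^ 2)) *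
        (B * x ^ ((1:ℝ)/2))
      = (x ^ ((2:ℝ)-1) * x ^ (-(3:ℝ)/2) * x ^ ((1:ℝ)/2)) * (2 * B * (1/(2*B))) *
          Real.exp (-A * x ^ 2) := by ring
    _ = Real.exp (-A * x ^ 2) := by rw [hx3, hB2]; ring

end Aux

/-- **Integral approximation via Gamma-distributed samples.** For `a, B, A > 0`, `b ∈ ℝ`
and a bounded measurable `G : ℝ → ℂ`,
`∫ e^{−A(ay+b)²}/(B√|ay+b|)·G(y) dy
  = (Γ(1/4)/(2aA^{1/4}B)) · ∫_0^∞ f(u)·(G((−√u−b)/a) + G((√u−b)/a)) du`,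
where `f(u) = (A^{1/4}/Γ(1/4))·u^{−3/4}·e^{−Au}` is the density of the Gamma distribution
with shape `1/4` and rate `A`; consequently the left-hand side is bounded in magnitude by
`(Γ(1/4)·A^{−1/4}/(aB))·sup_y |G(y)|`. -/
theorem integral_via_gamma_samples (a b A B : ℝ) (ha : 0 < a) (hA : 0 < A) (hB : 0 < B)
    (G : ℝ → ℂ) (hG : Measurable G) (hbd : ∃ C, ∀ y, ‖G y‖ ≤ C) :
    (∫ y : ℝ, (↑(Real.exp (-A * (a * y + b) ^ 2) / (B * Real.sqrt |a * y + b|)) : ℂ) * G y)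
        = (↑(Real.Gamma (1 / 4) / (2 * a * A ^ ((1 : ℝ) / 4) * B)) : ℂ) *
          ∫ u in Set.Ioi (0 : ℝ),
            (↑(A ^ ((1 : ℝ) / 4) / Real.Gamma (1 / 4) * u ^ (-(3 : ℝ) / 4)
                * Real.exp (-A * u)) : ℂ) *
              (G ((-Real.sqrt u - b) / a) + G ((Real.sqrt u - b) / a)) ∧
    ‖∫ y : ℝ, (↑(Real.exp (-A * (a * y + b) ^ 2) / (B * Real.sqrt |a * y + b|)) : ℂ) * G y‖
        ≤ Real.Gamma (1 / 4) * A ^ (-(1 : ℝ) / 4) / (a * B) * ⨆ y : ℝ, ‖G y‖ := by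
  obtain ⟨C, hC⟩ := hbd
  have hbdd : BddAbove (Set.range fun y => ‖G y‖) := ⟨C, by rintro _ ⟨y, rfl⟩; exact hC y⟩
  set M : ℝ := ⨆ y : ℝ, ‖G y‖ with hMdef
  have hM : ∀ y, ‖G y‖ ≤ M := fun y => le_ciSup hbdd y
  have hM0 : 0 ≤ M := (norm_nonneg _).trans (hM 0)
  have hΓ : 0 < Real.Gamma (1/4) := Real.Gamma_pos_of_pos (by norm_num)
  have hA4 : 0 < A ^ ((1:ℝ)/4) := Real.rpow_pos_of_pos hA _
  set φ : ℝ → ℂ :=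
    fun x => (↑(Real.exp (-A * x ^ 2) / (B * Real.sqrt |x|)) : ℂ) * G ((x - b) / a) with hφ
  set g : ℝ → ℝ → ℂ := fun s u =>
    (↑(1 / (2 * B) * u ^ (-(3:ℝ)/4) * Real.exp (-A * u)) : ℂ) *
      G ((s * Real.sqrt u - b) / a) with hg
  -- measurability
  have hgm : ∀ s : ℝ, Measurable (g s) := by
    intro s
    apply Measurable.mul
    · exact Complex.measurable_ofReal.comp
        (((measurable_id.pow_const (-(3:ℝ)/4)).const_mul _).mul
          ((measurable_id.const_mul (-A)).exp))
    · exact hG.comp (((Real.continuous_sqrt.measurable.const_mul s).sub_const b).div_const a)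
  -- domination
  have hdom : IntegrableOn (fun u : ℝ => u ^ (-(3:ℝ)/4) * Real.exp (-A * u)) (Ioi 0) := by
    have := integrableOn_rpow_mul_exp_neg_mul_rpow
      (p := 1) (s := -(3:ℝ)/4) (b := A) (by norm_num) one_pos hA
    simpa [Real.rpow_one] using this
  have haebd : ∀ s : ℝ, ∀ u ∈ Ioi (0:ℝ),
      ‖g s u‖ ≤ M / (2*B) * (u ^ (-(3:ℝ)/4) * Real.exp (-A * u)) := by
    intro s u hu
    have hu' : (0:ℝ) < u := hu
    have hr : (0:ℝ) ≤ 1 / (2 * B) * u ^ (-(3:ℝ)/4) * Real.exp (-A * u) := by positivity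
    calc ‖g s u‖
        = (1 / (2 * B) * u ^ (-(3:ℝ)/4) * Real.exp (-A * u)) * ‖G ((s * Real.sqrt u - b) / a)‖ := by
          rw [hg]; simp only []
          rw [norm_mul, Complex.norm_real, Real.norm_eq_abs, abs_of_nonneg hr]
      _ ≤ (1 / (2 * B) * u ^ (-(3:ℝ)/4) * Real.exp (-A * u)) * M :=
          mul_le_mul_of_nonneg_left (hM _) hr
      _ = M / (2*B) * (u ^ (-(3:ℝ)/4) * Real.exp (-A * u)) := by ring
  have hgint : ∀ s : ℝ, IntegrableOn (g s) (Ioi 0) := by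
    intro s
    refine Integrable.mono' (hdom.const_mul (M / (2*B))) ((hgm s).aestronglyMeasurable) ?_
    filter_upwards [ae_restrict_mem measurableSet_Ioi] with u hu
    exact haebd s u hu
  -- pointwise change of variables
  have hkey : ∀ s : ℝ, s = 1 ∨ s = -1 → ∀ x ∈ Ioi (0:ℝ),
      (|(2:ℝ)| * x ^ ((2:ℝ) - 1)) • g s (x ^ (2:ℝ)) = φ (s * x) := by
    intro s hs x hx
    have hx0 : (0:ℝ) < x := hx
    have h2 : x ^ (2:ℝ) = x ^ 2 := by
      rw [show (2:ℝ) = ((2:ℕ):ℝ) by norm_num, Real.rpow_natCast]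
    have hsq : Real.sqrt (x ^ (2:ℝ)) = x := by rw [h2, Real.sqrt_sq hx0.le]
    have hsx2 : (s * x) ^ 2 = x ^ 2 := by rcases hs with rfl | rfl <;> ring
    have habs : |s * x| = |x| := by rcases hs with rfl | rfl <;> simp [abs_mul]
    rw [hφ, hg]; simp only []
    rw [Complex.real_smul, hsq, hsx2, habs, ← mul_assoc, ← Complex.ofReal_mul,
      gamma_samples_coeff hB hx0]
  -- integrability on the halves
  have hIoi : IntegrableOn φ (Ioi 0) := by
    have h2 := (integrableOn_Ioi_comp_rpow_iff (g 1) two_ne_zero).mpr (hgint 1)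
    exact h2.congr_fun
      (fun x hx => by beta_reduce; rw [hkey 1 (Or.inl rfl) x hx, one_mul]) measurableSet_Ioi
  have hIic : IntegrableOn φ (Iic 0) := by
    rw [← Measure.map_neg_eq_self (volume : Measure ℝ)]
    have m : MeasurableEmbedding fun x : ℝ => -x := (Homeomorph.neg ℝ).measurableEmbedding
    rw [m.integrableOn_map_iff]
    simp_rw [Function.comp_def, neg_preimage, neg_Iic, neg_zero]
    rw [integrableOn_Ici_iff_integrableOn_Ioi]
    have h2 := (integrableOn_Ioi_comp_rpow_iff (g (-1)) two_ne_zero).mpr (hgint (-1))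
    exact h2.congr_fun
      (fun x hx => by beta_reduce; rw [hkey (-1) (Or.inr rfl) x hx, neg_one_mul]) measurableSet_Ioi
  -- the integral transformations
  have step0 : (∫ y : ℝ,
      (↑(Real.exp (-A * (a * y + b) ^ 2) / (B * Real.sqrt |a * y + b|)) : ℂ) * G y)
      = ∫ y : ℝ, φ (a * y + b) := by
    congr 1; funext y
    rw [hφ]; simp only []
    rw [add_sub_cancel_right, mul_div_cancel_left₀ y ha.ne']
  have e1 : (∫ y : ℝ, φ (a * y + b)) = a⁻¹ • ∫ x, φ x := by
    calc (∫ y : ℝ, φ (a * y + b)) = ∫ y : ℝ, (fun x => φ (x + b)) (a * y) := by rfl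
      _ = |a⁻¹| • ∫ x, φ (x + b) := Measure.integral_comp_mul_left (fun x => φ (x + b)) a
      _ = a⁻¹ • ∫ x, φ x := by
          rw [integral_add_right_eq_self φ b, abs_of_pos (inv_pos.mpr ha)]
  have e3 : (∫ x in Iic (0:ℝ), φ x) = ∫ u in Ioi (0:ℝ), g (-1) u := by
    rw [show (0:ℝ) = -0 by norm_num, ← integral_comp_neg_Ioi, neg_zero]
    rw [← integral_comp_rpow_Ioi (g (-1)) two_ne_zero]
    refine setIntegral_congr_fun measurableSet_Ioi (fun x hx => ?_)
    rw [← neg_one_mul, ← hkey (-1) (Or.inr rfl) x hx]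
  have e4 : (∫ x in Ioi (0:ℝ), φ x) = ∫ u in Ioi (0:ℝ), g 1 u := by
    rw [← integral_comp_rpow_Ioi (g 1) two_ne_zero]
    refine setIntegral_congr_fun measurableSet_Ioi (fun x hx => ?_)
    rw [show φ x = φ (1 * x) by rw [one_mul], ← hkey 1 (Or.inl rfl) x hx]
  have echain : (∫ y : ℝ,
      (↑(Real.exp (-A * (a * y + b) ^ 2) / (B * Real.sqrt |a * y + b|)) : ℂ) * G y)
      = a⁻¹ • ((∫ u in Ioi (0:ℝ), g (-1) u) + ∫ u in Ioi (0:ℝ), g 1 u) := by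
    rw [step0, e1, ← intervalIntegral.integral_Iic_add_Ioi hIic hIoi, e3, e4]
  -- main equality
  have heq : a⁻¹ • ((∫ u in Ioi (0:ℝ), g (-1) u) + ∫ u in Ioi (0:ℝ), g 1 u)
      = (↑(Real.Gamma (1 / 4) / (2 * a * A ^ ((1 : ℝ) / 4) * B)) : ℂ) *
        ∫ u in Set.Ioi (0 : ℝ),
          (↑(A ^ ((1 : ℝ) / 4) / Real.Gamma (1 / 4) * u ^ (-(3 : ℝ) / 4)
              * Real.exp (-A * u)) : ℂ) *
            (G ((-Real.sqrt u - b) / a) + G ((Real.sqrt u - b) / a)) := by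
    rw [← integral_add (hgint (-1)) (hgint 1), ← integral_smul, ← integral_const_mul]
    refine setIntegral_congr_fun measurableSet_Ioi (fun u hu => ?_)
    have hr : (a⁻¹ : ℝ) * (1 / (2 * B) * u ^ (-(3:ℝ)/4) * Real.exp (-A * u))
        = Real.Gamma (1 / 4) / (2 * a * A ^ ((1 : ℝ) / 4) * B) *
          (A ^ ((1 : ℝ) / 4) / Real.Gamma (1 / 4) * u ^ (-(3 : ℝ) / 4) * Real.exp (-A * u)) := by
      field_simp
    have hcast : (↑(a⁻¹ : ℝ) : ℂ) * ↑(1 / (2 * B) * u ^ (-(3:ℝ)/4) * Real.exp (-A * u))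
        = (↑(Real.Gamma (1 / 4) / (2 * a * A ^ ((1 : ℝ) / 4) * B)) : ℂ) *
          ↑(A ^ ((1 : ℝ) / 4) / Real.Gamma (1 / 4) * u ^ (-(3 : ℝ) / 4) * Real.exp (-A * u)) := by
      rw [← Complex.ofReal_mul, ← Complex.ofReal_mul, hr]
    rw [hg]; simp only []
    rw [Complex.real_smul, neg_one_mul, one_mul]
    calc (↑(a⁻¹ : ℝ) : ℂ) *
        ((↑(1 / (2 * B) * u ^ (-(3:ℝ)/4) * Real.exp (-A * u)) : ℂ) * G ((-Real.sqrt u - b) / a) +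
         (↑(1 / (2 * B) * u ^ (-(3:ℝ)/4) * Real.exp (-A * u)) : ℂ) * G ((Real.sqrt u - b) / a))
        = (↑(a⁻¹ : ℝ) : ℂ) * ↑(1 / (2 * B) * u ^ (-(3:ℝ)/4) * Real.exp (-A * u)) *
            (G ((-Real.sqrt u - b) / a) + G ((Real.sqrt u - b) / a)) := by ring
      _ = _ := by rw [hcast]; ring
  refine ⟨by rw [echain, heq], ?_⟩
  -- the bound
  have hval : (∫ u in Ioi (0:ℝ), u ^ (-(3:ℝ)/4) * Real.exp (-A * u))
      = A ^ (-(1:ℝ)/4) * Real.Gamma (1/4) := by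
    have := integral_rpow_mul_exp_neg_mul_rpow
      (p := 1) (q := -(3:ℝ)/4) (b := A) one_pos (by norm_num) hA
    simp only [Real.rpow_one] at this
    rw [this]
    norm_num
  have hbnd : ∀ s : ℝ, ‖∫ u in Ioi (0:ℝ), g s u‖
      ≤ M / (2*B) * (A ^ (-(1:ℝ)/4) * Real.Gamma (1/4)) := by
    intro s
    have h1 : ‖∫ u in Ioi (0:ℝ), g s u‖
        ≤ ∫ u in Ioi (0:ℝ), M / (2*B) * (u ^ (-(3:ℝ)/4) * Real.exp (-A * u)) := by
      refine norm_integral_le_of_norm_le (hdom.const_mul (M / (2*B))) ?_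
      filter_upwards [ae_restrict_mem measurableSet_Ioi] with u hu
      exact haebd s u hu
    rw [MeasureTheory.integral_const_mul, hval] at h1
    exact h1
  rw [echain]
  calc ‖a⁻¹ • ((∫ u in Ioi (0:ℝ), g (-1) u) + ∫ u in Ioi (0:ℝ), g 1 u)‖
      = a⁻¹ * ‖(∫ u in Ioi (0:ℝ), g (-1) u) + ∫ u in Ioi (0:ℝ), g 1 u‖ := by
        rw [norm_smul, Real.norm_eq_abs, abs_of_pos (inv_pos.mpr ha)]
    _ ≤ a⁻¹ * (‖∫ u in Ioi (0:ℝ), g (-1) u‖ + ‖∫ u in Ioi (0:ℝ), g 1 u‖) := by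
        gcongr
        exact norm_add_le _ _
    _ ≤ a⁻¹ * (M / (2*B) * (A ^ (-(1:ℝ)/4) * Real.Gamma (1/4))
          + M / (2*B) * (A ^ (-(1:ℝ)/4) * Real.Gamma (1/4))) := by
        gcongr
        · exact hbnd (-1)
        · exact hbnd 1
    _ = Real.Gamma (1 / 4) * A ^ (-(1 : ℝ) / 4) / (a * B) * M := by
        field_simp
        ring
end

section
/- Let m ≥ 1, let g : ℝ^{2m} → ℂ be measurable, and let C₁, C₂, p, τ ≥ 0 be constants such that |g(x)| ≤ C₁ for all x ∈ ℝ^{2m} and ∫_{ℝ^{2m}} |g(x)|² dx ≤ π^m·C₂. Then ∫_{ℝ^{2m}} e^{−2p‖x‖²}·|g(x)|² dx ≤ π^m·( (τ^m/m!)·C₁² + e^{−2pτ}·C₂ ), where ‖x‖ denotes the Euclidean norm on ℝ^{2m}. -/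
open MeasureTheory Real ENNReal NNReal

/-- **Gaussian-damped splitting inequality (purity decay under the depolarizing map).**
If `g : ℝ^{2m} → ℂ` satisfies `|g(x)| ≤ C₁` pointwise and `∫ |g|² ≤ π^m·C₂`, then for
`p, τ ≥ 0`,
`∫ e^{−2p‖x‖²}·|g(x)|² dx ≤ π^m·((τ^m/m!)·C₁² + e^{−2pτ}·C₂)`. -/
theorem purity_decay_splitting (m : ℕ) (hm : 1 ≤ m)
    (g : EuclideanSpace ℝ (Fin (2 * m)) → ℂ) (hg : Measurable g)
    (C₁ C₂ p τ : ℝ) (hC₁ : 0 ≤ C₁) (hC₂ : 0 ≤ C₂) (hp : 0 ≤ p) (hτ : 0 ≤ τ)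
    (hbd : ∀ x, ‖g x‖ ≤ C₁)
    (hL2 : (∫⁻ x, (‖g x‖₊ : ℝ≥0∞) ^ 2) ≤ ENNReal.ofReal (Real.pi ^ m * C₂)) :
    (∫⁻ x, ENNReal.ofReal (Real.exp (-2 * p * ‖x‖ ^ 2)) * (‖g x‖₊ : ℝ≥0∞) ^ 2)
      ≤ ENNReal.ofReal (Real.pi ^ m *
          ((τ ^ m / (m.factorial : ℝ)) * C₁ ^ 2 + Real.exp (-2 * p * τ) * C₂)) := by
  haveI : Nonempty (Fin (2 * m)) := ⟨⟨0, by omega⟩⟩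
  set B := Metric.closedBall (0 : EuclideanSpace ℝ (Fin (2 * m))) (Real.sqrt τ) with hB
  have hBmeas : MeasurableSet B := Metric.isClosed_closedBall.measurableSet
  -- volume of the ball
  have hvol : volume B = ENNReal.ofReal (Real.pi ^ m * (τ ^ m / (m.factorial : ℝ))) := by
    rw [hB, EuclideanSpace.volume_closedBall]
    have hcard : Fintype.card (Fin (2 * m)) = 2 * m := Fintype.card_fin _
    rw [hcard]
    have h1 : ((2 * m : ℕ) : ℝ) / 2 + 1 = (m : ℝ) + 1 := by push_cast; ring
    have h2 : Real.Gamma ((2 * m : ℕ) / 2 + 1) = (m.factorial : ℝ) := by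
      rw [h1, Real.Gamma_nat_eq_factorial]
    have h3 : Real.sqrt Real.pi ^ (2 * m) = Real.pi ^ m := by
      rw [pow_mul, Real.sq_sqrt Real.pi_pos.le]
    have h4 : (ENNReal.ofReal (Real.sqrt τ)) ^ (2 * m) = ENNReal.ofReal (τ ^ m) := by
      rw [← ENNReal.ofReal_pow (Real.sqrt_nonneg τ), pow_mul, Real.sq_sqrt hτ]
    rw [h2, h3, h4, ← ENNReal.ofReal_mul (by positivity)]
    ring_nf
  have key : (∫⁻ x, ENNReal.ofReal (Real.exp (-2 * p * ‖x‖ ^ 2)) * (‖g x‖₊ : ℝ≥0∞) ^ 2)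
      = (∫⁻ x in B, ENNReal.ofReal (Real.exp (-2 * p * ‖x‖ ^ 2)) * (‖g x‖₊ : ℝ≥0∞) ^ 2)
      + (∫⁻ x in Bᶜ, ENNReal.ofReal (Real.exp (-2 * p * ‖x‖ ^ 2)) * (‖g x‖₊ : ℝ≥0∞) ^ 2) :=
    (lintegral_add_compl _ hBmeas).symm
  rw [key]
  have bound1 : (∫⁻ x in B, ENNReal.ofReal (Real.exp (-2 * p * ‖x‖ ^ 2)) * (‖g x‖₊ : ℝ≥0∞) ^ 2)
      ≤ ENNReal.ofReal (C₁ ^ 2) * volume B := by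
    calc (∫⁻ x in B, ENNReal.ofReal (Real.exp (-2 * p * ‖x‖ ^ 2)) * (‖g x‖₊ : ℝ≥0∞) ^ 2)
        ≤ ∫⁻ _ in B, ENNReal.ofReal (C₁ ^ 2) := by
          apply setLIntegral_mono' hBmeas
          intro x _
          have he : ENNReal.ofReal (Real.exp (-2 * p * ‖x‖ ^ 2)) ≤ 1 := by
            rw [← ENNReal.ofReal_one]
            exact ENNReal.ofReal_le_ofReal (Real.exp_le_one_iff.mpr (by nlinarith [sq_nonneg ‖x‖]))
          have hg' : ((‖g x‖₊ : ℝ≥0∞)) ^ 2 ≤ ENNReal.ofReal (C₁ ^ 2) := by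
            have h5 : (‖g x‖₊ : ℝ≥0∞) = ENNReal.ofReal ‖g x‖ := (ofReal_norm _).symm
            rw [h5, ← ENNReal.ofReal_pow (norm_nonneg _)]
            exact ENNReal.ofReal_le_ofReal (by nlinarith [norm_nonneg (g x), hbd x])
          calc ENNReal.ofReal (Real.exp (-2 * p * ‖x‖ ^ 2)) * (‖g x‖₊ : ℝ≥0∞) ^ 2
              ≤ 1 * ENNReal.ofReal (C₁ ^ 2) := mul_le_mul' he hg'
            _ = ENNReal.ofReal (C₁ ^ 2) := one_mul _
      _ = ENNReal.ofReal (C₁ ^ 2) * volume B := by rw [setLIntegral_const]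
  have bound2 : (∫⁻ x in Bᶜ, ENNReal.ofReal (Real.exp (-2 * p * ‖x‖ ^ 2)) * (‖g x‖₊ : ℝ≥0∞) ^ 2)
      ≤ ENNReal.ofReal (Real.exp (-2 * p * τ)) * ENNReal.ofReal (Real.pi ^ m * C₂) := by
    calc (∫⁻ x in Bᶜ, ENNReal.ofReal (Real.exp (-2 * p * ‖x‖ ^ 2)) * (‖g x‖₊ : ℝ≥0∞) ^ 2)
        ≤ ∫⁻ x in Bᶜ, ENNReal.ofReal (Real.exp (-2 * p * τ)) * (‖g x‖₊ : ℝ≥0∞) ^ 2 := by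
          apply setLIntegral_mono' hBmeas.compl
          intro x hx
          have hx' : Real.sqrt τ < ‖x‖ := by
            simp only [hB, Set.mem_compl_iff, Metric.mem_closedBall, dist_zero_right, not_le] at hx
            exact hx
          have hτx : τ ≤ ‖x‖ ^ 2 := by
            have := Real.sqrt_le_sqrt hx'.le
            nlinarith [Real.sq_sqrt hτ, Real.sqrt_nonneg τ, norm_nonneg x]
          exact mul_le_mul_left (ENNReal.ofReal_le_ofReal
            (Real.exp_le_exp.mpr (by nlinarith))) _
      _ = ENNReal.ofReal (Real.exp (-2 * p * τ)) * ∫⁻ x in Bᶜ, (‖g x‖₊ : ℝ≥0∞) ^ 2 := by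
          rw [lintegral_const_mul]
          exact (hg.nnnorm.coe_nnreal_ennreal).pow_const 2
      _ ≤ ENNReal.ofReal (Real.exp (-2 * p * τ)) * ∫⁻ x, (‖g x‖₊ : ℝ≥0∞) ^ 2 :=
          mul_le_mul_right (setLIntegral_le_lintegral _ _) _
      _ ≤ ENNReal.ofReal (Real.exp (-2 * p * τ)) * ENNReal.ofReal (Real.pi ^ m * C₂) :=
          mul_le_mul_right hL2 _
  calc _ ≤ ENNReal.ofReal (C₁ ^ 2) * volume B
        + ENNReal.ofReal (Real.exp (-2 * p * τ)) * ENNReal.ofReal (Real.pi ^ m * C₂) :=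
        add_le_add bound1 bound2
    _ = ENNReal.ofReal (Real.pi ^ m *
          ((τ ^ m / (m.factorial : ℝ)) * C₁ ^ 2 + Real.exp (-2 * p * τ) * C₂)) := by
        rw [hvol, ← ENNReal.ofReal_mul (by positivity), ← ENNReal.ofReal_mul (Real.exp_pos _).le,
          ← ENNReal.ofReal_add (by positivity) (by positivity)]
        ring_nf
end

section
/- Let m ≥ 1, p ≥ 0, C ≥ 0, and let g : ℝ^{2m} → ℂ be measurable with |g(x)| ≤ C for all x ∈ ℝ^{2m} and ∫_{ℝ^{2m}} |g(x)|² dx ≤ π^m·C². Then ∫_{ℝ^{2m}} e^{−2p‖x‖²}·|g(x)|² dx ≤ π^m·C²·( 0.9^m + e^{−1.8·p·m/e} ), where e is Euler's number and ‖x‖ denotes the Euclidean norm on ℝ^{2m}. -/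
open MeasureTheory Real ENNReal NNReal

/-- **Explicit exponential purity decay under the depolarizing map.** If
`g : ℝ^{2m} → ℂ` satisfies `|g(x)| ≤ C` pointwise and `∫ |g|² ≤ π^m·C²`, then for `p ≥ 0`,
`∫ e^{−2p‖x‖²}·|g(x)|² dx ≤ π^m·C²·(0.9^m + e^{−1.8·p·m/e})`. -/
theorem purity_decay_explicit (m : ℕ) (hm : 1 ≤ m) (p C : ℝ) (hp : 0 ≤ p) (hC : 0 ≤ C)
    (g : EuclideanSpace ℝ (Fin (2 * m)) → ℂ) (hg : Measurable g)
    (hbd : ∀ x, ‖g x‖ ≤ C)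
    (hL2 : (∫⁻ x, (‖g x‖₊ : ℝ≥0∞) ^ 2) ≤ ENNReal.ofReal (Real.pi ^ m * C ^ 2)) :
    (∫⁻ x, ENNReal.ofReal (Real.exp (-2 * p * ‖x‖ ^ 2)) * (‖g x‖₊ : ℝ≥0∞) ^ 2)
      ≤ ENNReal.ofReal (Real.pi ^ m * C ^ 2 *
          ((0.9 : ℝ) ^ m + Real.exp (-(1.8 : ℝ) * p * m / Real.exp 1))) := by
  set τ : ℝ := 0.9 * m / Real.exp 1 with hτdef
  have hτ : 0 ≤ τ := by positivity
  set r : ℝ := Real.sqrt τ with hrdef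
  set s : Set (EuclideanSpace ℝ (Fin (2 * m))) := Metric.closedBall 0 r with hsdef
  have hs : MeasurableSet s := measurableSet_closedBall
  set f : EuclideanSpace ℝ (Fin (2 * m)) → ℝ≥0∞ :=
    fun x => ENNReal.ofReal (Real.exp (-2 * p * ‖x‖ ^ 2)) * (‖g x‖₊ : ℝ≥0∞) ^ 2 with hfdef
  -- factorial bound : τ^m / m! ≤ 0.9^m
  have hfactpos : (0 : ℝ) < (m.factorial : ℝ) := by exact_mod_cast m.factorial_pos
  have hfact : τ ^ m / (m.factorial : ℝ) ≤ (0.9 : ℝ) ^ m := by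
    rw [div_le_iff₀ hfactpos]
    have h1 : (m : ℝ) ^ m / (m.factorial : ℝ) ≤ Real.exp 1 ^ m := by
      have := Real.pow_div_factorial_le_exp (x := (m : ℝ)) (m.cast_nonneg) m
      calc (m : ℝ) ^ m / (m.factorial : ℝ) ≤ Real.exp (m : ℝ) := this
        _ = Real.exp 1 ^ m := by
            rw [← Real.exp_nat_mul]; norm_num
    have h2 : (m : ℝ) ^ m ≤ Real.exp 1 ^ m * (m.factorial : ℝ) := by
      rw [div_le_iff₀ hfactpos] at h1; linarith
    have hτm : τ ^ m = (0.9 : ℝ) ^ m * ((m : ℝ) ^ m / Real.exp 1 ^ m) := by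
      rw [hτdef, div_pow, mul_pow, mul_div_assoc]
    rw [hτm]
    have hepos : (0 : ℝ) < Real.exp 1 ^ m := by positivity
    have h3 : (m : ℝ) ^ m / Real.exp 1 ^ m ≤ (m.factorial : ℝ) := by
      rw [div_le_iff₀ hepos]; linarith
    exact mul_le_mul_of_nonneg_left h3 (by positivity)
  -- split the integral
  have hsplit : (∫⁻ x, f x) = (∫⁻ x in s, f x) + (∫⁻ x in sᶜ, f x) :=
    (lintegral_add_compl f hs).symm
  -- bound on s
  have hb1 : (∫⁻ x in s, f x) ≤ ENNReal.ofReal (Real.pi ^ m * C ^ 2 * (0.9 : ℝ) ^ m) := by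
    have hpt : ∀ x, f x ≤ ENNReal.ofReal (C ^ 2) := by
      intro x
      have he : ENNReal.ofReal (Real.exp (-2 * p * ‖x‖ ^ 2)) ≤ 1 := by
        rw [ENNReal.ofReal_le_one]
        exact Real.exp_le_one_iff.mpr (by nlinarith [sq_nonneg ‖x‖])
      have hgx : (‖g x‖₊ : ℝ≥0∞) ^ 2 ≤ ENNReal.ofReal (C ^ 2) := by
        rw [ENNReal.ofReal_pow hC, ← enorm_eq_nnnorm, ← ofReal_norm]
        exact pow_le_pow_left' (ENNReal.ofReal_le_ofReal (hbd x)) 2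
      calc f x ≤ 1 * ENNReal.ofReal (C ^ 2) := mul_le_mul' he hgx
        _ = ENNReal.ofReal (C ^ 2) := one_mul _
    haveI : Nonempty (Fin (2 * m)) := ⟨⟨0, by omega⟩⟩
    have hvol : volume s = ENNReal.ofReal (τ ^ m * (Real.pi ^ m / (m.factorial : ℝ))) := by
      rw [hsdef, EuclideanSpace.volume_closedBall]
      have hcard : Fintype.card (Fin (2 * m)) = 2 * m := Fintype.card_fin _
      rw [hcard]
      have h1 : ((2 * m : ℕ) : ℝ) / 2 + 1 = (m : ℝ) + 1 := by push_cast; ring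
      rw [h1]
      have h2 : Real.Gamma ((m : ℝ) + 1) = (m.factorial : ℝ) := by
        exact_mod_cast Real.Gamma_nat_eq_factorial m
      rw [h2]
      rw [← ENNReal.ofReal_pow (Real.sqrt_nonneg τ), ← ENNReal.ofReal_mul (by positivity)]
      congr 1
      have hr2 : r ^ (2 * m) = τ ^ m := by
        rw [pow_mul, Real.sq_sqrt hτ]
      have hπ : Real.sqrt π ^ (2 * m) = Real.pi ^ m := by
        rw [pow_mul, Real.sq_sqrt Real.pi_pos.le]
      rw [hr2, hπ]
    calc (∫⁻ x in s, f x) ≤ ∫⁻ _ in s, ENNReal.ofReal (C ^ 2) :=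
          setLIntegral_mono (by fun_prop) (fun x _ => hpt x)
      _ = ENNReal.ofReal (C ^ 2) * volume s := by rw [setLIntegral_const]
      _ = ENNReal.ofReal (C ^ 2 * (τ ^ m * (Real.pi ^ m / (m.factorial : ℝ)))) := by
          rw [hvol, ← ENNReal.ofReal_mul (by positivity)]
      _ ≤ ENNReal.ofReal (Real.pi ^ m * C ^ 2 * (0.9 : ℝ) ^ m) := by
          apply ENNReal.ofReal_le_ofReal
          have : C ^ 2 * (τ ^ m * (Real.pi ^ m / (m.factorial : ℝ)))
              = (Real.pi ^ m * C ^ 2) * (τ ^ m / (m.factorial : ℝ)) := by ring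
          rw [this]
          have hπC : (0 : ℝ) ≤ Real.pi ^ m * C ^ 2 := by positivity
          calc (Real.pi ^ m * C ^ 2) * (τ ^ m / (m.factorial : ℝ))
              ≤ (Real.pi ^ m * C ^ 2) * (0.9 : ℝ) ^ m :=
                mul_le_mul_of_nonneg_left hfact hπC
            _ = Real.pi ^ m * C ^ 2 * (0.9 : ℝ) ^ m := rfl
  -- bound on sᶜ
  have hexp_eq : -2 * p * τ = -(1.8 : ℝ) * p * m / Real.exp 1 := by
    rw [hτdef]; ring_nf
  have hb2 : (∫⁻ x in sᶜ, f x)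
      ≤ ENNReal.ofReal (Real.pi ^ m * C ^ 2 * Real.exp (-(1.8 : ℝ) * p * m / Real.exp 1)) := by
    have hpt : ∀ x ∈ sᶜ, f x ≤ ENNReal.ofReal (Real.exp (-2 * p * τ)) * (‖g x‖₊ : ℝ≥0∞) ^ 2 := by
      intro x hx
      have hx' : r < ‖x‖ := by
        simp only [hsdef, Set.mem_compl_iff, Metric.mem_closedBall, dist_zero_right, not_le] at hx
        exact hx
      have hτle : τ ≤ ‖x‖ ^ 2 := by
        have := Real.sqrt_le_sqrt (le_of_lt hx')
        nlinarith [Real.sqrt_nonneg τ, Real.sq_sqrt hτ, norm_nonneg x]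
      have : Real.exp (-2 * p * ‖x‖ ^ 2) ≤ Real.exp (-2 * p * τ) :=
        Real.exp_le_exp.mpr (by nlinarith)
      exact mul_le_mul' (ENNReal.ofReal_le_ofReal this) le_rfl
    calc (∫⁻ x in sᶜ, f x)
        ≤ ∫⁻ x in sᶜ, ENNReal.ofReal (Real.exp (-2 * p * τ)) * (‖g x‖₊ : ℝ≥0∞) ^ 2 :=
          setLIntegral_mono (by fun_prop) hpt
      _ = ENNReal.ofReal (Real.exp (-2 * p * τ)) * ∫⁻ x in sᶜ, (‖g x‖₊ : ℝ≥0∞) ^ 2 :=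
          lintegral_const_mul _ (by fun_prop)
      _ ≤ ENNReal.ofReal (Real.exp (-2 * p * τ)) * ∫⁻ x, (‖g x‖₊ : ℝ≥0∞) ^ 2 :=
          mul_le_mul' le_rfl (setLIntegral_le_lintegral _ _)
      _ ≤ ENNReal.ofReal (Real.exp (-2 * p * τ)) * ENNReal.ofReal (Real.pi ^ m * C ^ 2) :=
          mul_le_mul' le_rfl hL2
      _ = ENNReal.ofReal (Real.pi ^ m * C ^ 2 * Real.exp (-(1.8 : ℝ) * p * m / Real.exp 1)) := by
          rw [← ENNReal.ofReal_mul (Real.exp_nonneg _), hexp_eq, mul_comm]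
  calc (∫⁻ x, f x) = (∫⁻ x in s, f x) + (∫⁻ x in sᶜ, f x) := hsplit
    _ ≤ ENNReal.ofReal (Real.pi ^ m * C ^ 2 * (0.9 : ℝ) ^ m)
        + ENNReal.ofReal (Real.pi ^ m * C ^ 2 * Real.exp (-(1.8 : ℝ) * p * m / Real.exp 1)) :=
        add_le_add hb1 hb2
    _ = ENNReal.ofReal (Real.pi ^ m * C ^ 2 *
          ((0.9 : ℝ) ^ m + Real.exp (-(1.8 : ℝ) * p * m / Real.exp 1))) := by
        rw [← ENNReal.ofReal_add (by positivity) (by positivity)]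
        ring_nf
end

section
/- Let μ be a Borel probability measure on ℝ with finite third absolute moment, and let δ > 0. Then | (2/δ²)·( 1 − ∫_ℝ e^{iδx} dμ(x) ) + (2/δ³)·( ∫_ℝ e^{iδ²x} dμ(x) − 1 ) − ∫_ℝ x² dμ(x) | ≤ (δ/3)·∫_ℝ |x|³ dμ(x) + δ·∫_ℝ x² dμ(x). -/
open MeasureTheory Complex

open intervalIntegral

private lemma deriv_bound {f g : ℝ → ℂ} {b : ℝ → ℝ}
    (hf : ∀ s, HasDerivAt f (g s) s) (hg : ∀ s, ‖g s‖ ≤ b s)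
    (hgc : Continuous g) (hbc : Continuous b) {t : ℝ} (ht : 0 ≤ t) :
    ‖f t - f 0‖ ≤ ∫ s in (0:ℝ)..t, b s := by
  rw [← intervalIntegral.integral_eq_sub_of_hasDerivAt (fun s _ => hf s)
    (hgc.intervalIntegrable _ _)]
  refine (intervalIntegral.norm_integral_le_integral_norm ht).trans ?_
  exact intervalIntegral.integral_mono_on ht (hgc.norm.intervalIntegrable _ _)
    (hbc.intervalIntegrable _ _) (fun s _ => hg s)

private lemma hder0 (s : ℝ) :
    HasDerivAt (fun s : ℝ => Complex.exp (I * s)) (I * Complex.exp (I * s)) s := by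
  have h := (((hasDerivAt_id s).ofReal_comp).const_mul I).cexp
  simpa [mul_comm] using h

private lemma taylor1 {t : ℝ} (ht : 0 ≤ t) : ‖Complex.exp (I * t) - 1‖ ≤ t := by
  have h := deriv_bound (f := fun s : ℝ => Complex.exp (I * s) - 1)
    (g := fun s => I * Complex.exp (I * s)) (b := fun _ => 1)
    (fun s => (hder0 s).sub_const 1)
    (fun s => by simp [Complex.norm_exp])
    (by fun_prop) continuous_const ht
  simpa using h

private lemma taylor2 {t : ℝ} (ht : 0 ≤ t) :
    ‖Complex.exp (I * t) - (1 + I * t)‖ ≤ t ^ 2 / 2 := by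
  have h := deriv_bound (f := fun s : ℝ => Complex.exp (I * s) - (1 + I * s))
    (g := fun s => I * (Complex.exp (I * s) - 1)) (b := fun s => |s|)
    (fun s => by
      have := (hder0 s).sub ((((hasDerivAt_id s).ofReal_comp).const_mul I).const_add 1)
      simpa [mul_sub, Pi.sub_def] using this)
    (fun s => by
      show ‖I * (Complex.exp (I * (s : ℂ)) - 1)‖ ≤ |s|
      rcases le_or_gt 0 s with hs | hs
      · simpa [_root_.abs_of_nonneg hs] using taylor1 hs
      · rw [abs_of_neg hs]
        have h1 : ‖Complex.exp (I * ((-s : ℝ) : ℂ)) - 1‖ ≤ -s := taylor1 (by linarith)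
        have hc : (starRingEnd ℂ) (Complex.exp (I * s) - 1)
            = Complex.exp (I * ((-s : ℝ) : ℂ)) - 1 := by
          simp [← Complex.exp_conj, map_mul, Complex.conj_I, Complex.conj_ofReal]
        calc ‖I * (Complex.exp (I * s) - 1)‖ = ‖Complex.exp (I * s) - 1‖ := by
              simp
          _ = ‖(starRingEnd ℂ) (Complex.exp (I * s) - 1)‖ := (RCLike.norm_conj _).symm
          _ ≤ -s := by rw [hc]; exact h1)
    (by fun_prop) (by fun_prop) ht
  have hint : ∫ s in (0:ℝ)..t, |s| = t ^ 2 / 2 := by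
    rw [intervalIntegral.integral_congr (g := fun s => s) ?_, integral_id]
    · ring
    · intro s hs
      rw [Set.uIcc_of_le ht] at hs
      exact abs_of_nonneg hs.1
  rw [hint] at h
  simpa using h

private lemma taylor3 {t : ℝ} (ht : 0 ≤ t) :
    ‖Complex.exp (I * t) - (1 + I * t - ((t ^ 2 / 2 : ℝ) : ℂ))‖ ≤ t ^ 3 / 6 := by
  have h := deriv_bound
    (f := fun s : ℝ => Complex.exp (I * s) - (1 + I * s - ((s ^ 2 / 2 : ℝ) : ℂ)))
    (g := fun s => I * (Complex.exp (I * s) - (1 + I * s))) (b := fun s => s ^ 2 / 2)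
    (fun s => by
      have h2 : HasDerivAt (fun s : ℝ => ((s ^ 2 / 2 : ℝ) : ℂ)) ((s : ℂ)) s := by
        have := ((hasDerivAt_pow 2 s).div_const 2).ofReal_comp
        simpa using this
      have := ((hder0 s).sub ((((hasDerivAt_id s).ofReal_comp).const_mul I).const_add 1)).add h2
      convert this using 1
      · ext u; simp only [id_eq]
      · ext u; simp only [Pi.add_apply, Pi.sub_apply, id_eq]; push_cast; ring
      · simp only [id_eq, mul_sub, mul_add, mul_one]
        rw [show (I : ℂ) * (I * (s : ℂ)) = -(s : ℂ) by rw [← mul_assoc, Complex.I_mul_I]; ring]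
        push_cast
        ring)
    (fun s => by
      show ‖I * (Complex.exp (I * (s : ℂ)) - (1 + I * (s : ℂ)))‖ ≤ s ^ 2 / 2
      rcases le_or_gt 0 s with hs | hs
      · simpa using taylor2 hs
      · have h1 := taylor2 (t := -s) (by linarith)
        have hc : (starRingEnd ℂ) (Complex.exp (I * s) - (1 + I * s))
            = Complex.exp (I * ((-s : ℝ) : ℂ)) - (1 + I * ((-s : ℝ) : ℂ)) := by
          simp [← Complex.exp_conj, map_mul, Complex.conj_I, Complex.conj_ofReal]
        calc ‖I * (Complex.exp (I * s) - (1 + I * s))‖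
            = ‖Complex.exp (I * s) - (1 + I * s)‖ := by simp
          _ = ‖(starRingEnd ℂ) (Complex.exp (I * s) - (1 + I * s))‖ := (RCLike.norm_conj _).symm
          _ ≤ (-s) ^ 2 / 2 := by rw [hc]; exact h1
          _ = s ^ 2 / 2 := by ring)
    (by fun_prop) (by fun_prop) ht
  have hint : ∫ s in (0:ℝ)..t, s ^ 2 / 2 = t ^ 3 / 6 := by
    simp [intervalIntegral.integral_div, integral_pow]
    ring
  rw [hint] at h
  simpa using h

private lemma taylor2_all (t : ℝ) :
    ‖Complex.exp (I * t) - (1 + I * t)‖ ≤ t ^ 2 / 2 := by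
  rcases le_or_gt 0 t with ht | ht
  · exact taylor2 ht
  · have h1 := taylor2 (t := -t) (by linarith)
    have hc : (starRingEnd ℂ) (Complex.exp (I * t) - (1 + I * t))
        = Complex.exp (I * ((-t : ℝ) : ℂ)) - (1 + I * ((-t : ℝ) : ℂ)) := by
      simp [← Complex.exp_conj, map_mul, Complex.conj_I, Complex.conj_ofReal]
    calc ‖Complex.exp (I * t) - (1 + I * t)‖
        = ‖(starRingEnd ℂ) (Complex.exp (I * t) - (1 + I * t))‖ := (RCLike.norm_conj _).symm
      _ ≤ (-t) ^ 2 / 2 := by rw [hc]; exact h1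
      _ = t ^ 2 / 2 := by ring

private lemma taylor3_all (t : ℝ) :
    ‖Complex.exp (I * t) - (1 + I * t - ((t ^ 2 / 2 : ℝ) : ℂ))‖ ≤ |t| ^ 3 / 6 := by
  rcases le_or_gt 0 t with ht | ht
  · simpa [_root_.abs_of_nonneg ht] using taylor3 ht
  · have h1 := taylor3 (t := -t) (by linarith)
    have hc : (starRingEnd ℂ) (Complex.exp (I * t) - (1 + I * t - ((t ^ 2 / 2 : ℝ) : ℂ)))
        = Complex.exp (I * ((-t : ℝ) : ℂ))
          - (1 + I * ((-t : ℝ) : ℂ) - (((-t) ^ 2 / 2 : ℝ) : ℂ)) := by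
      simp [← Complex.exp_conj, map_mul, map_sub, map_add, map_div₀, Complex.conj_I,
        Complex.conj_ofReal, neg_sq, Complex.conj_ofNat]
    rw [_root_.abs_of_neg ht]
    calc ‖Complex.exp (I * t) - (1 + I * t - ((t ^ 2 / 2 : ℝ) : ℂ))‖
        = ‖(starRingEnd ℂ) (Complex.exp (I * t) - (1 + I * t - ((t ^ 2 / 2 : ℝ) : ℂ)))‖ :=
          (RCLike.norm_conj _).symm
      _ ≤ (-t) ^ 3 / 6 := by rw [hc]; exact h1

/-- **Finite-difference approximation of the second moment.** For a Borel probability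
measure `μ` on `ℝ` with finite third absolute moment and `δ > 0`,
`| (2/δ²)·(1 − ∫ e^{iδx} dμ) + (2/δ³)·(∫ e^{iδ²x} dμ − 1) − ∫ x² dμ |
  ≤ (δ/3)·∫ |x|³ dμ + δ·∫ x² dμ`. -/
theorem second_moment_finite_difference (μ : Measure ℝ) [IsProbabilityMeasure μ]
    (hμ : Integrable (fun x : ℝ => |x| ^ 3) μ) (δ : ℝ) (hδ : 0 < δ) :
    ‖(2 / (δ : ℂ) ^ 2) * (1 - ∫ x : ℝ, Complex.exp (Complex.I * ((δ * x : ℝ) : ℂ)) ∂μ)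
        + (2 / (δ : ℂ) ^ 3) *
            ((∫ x : ℝ, Complex.exp (Complex.I * ((δ ^ 2 * x : ℝ) : ℂ)) ∂μ) - 1)
        - ((∫ x : ℝ, x ^ 2 ∂μ : ℝ) : ℂ)‖
      ≤ (δ / 3) * (∫ x : ℝ, |x| ^ 3 ∂μ) + δ * ∫ x : ℝ, x ^ 2 ∂μ := by
  have hδ0 : (δ : ℂ) ≠ 0 := by exact_mod_cast hδ.ne'
  have hi1 : Integrable (fun x : ℝ => x) μ := by
    refine ((integrable_const (1 : ℝ)).add hμ).mono aestronglyMeasurable_id ?_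
    filter_upwards with x
    simp only [Pi.add_apply, Real.norm_eq_abs]
    rw [_root_.abs_of_nonneg (by positivity : (0:ℝ) ≤ 1 + |x| ^ 3)]
    nlinarith [abs_nonneg x, sq_nonneg (|x| - 1),
      mul_nonneg (abs_nonneg x) (sq_nonneg (|x| - 1))]
  have hi2 : Integrable (fun x : ℝ => x ^ 2) μ := by
    refine ((integrable_const (1 : ℝ)).add hμ).mono (by fun_prop) ?_
    filter_upwards with x
    simp only [Pi.add_apply, Real.norm_eq_abs]
    rw [_root_.abs_of_nonneg (by positivity : (0:ℝ) ≤ 1 + |x| ^ 3),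
      _root_.abs_of_nonneg (sq_nonneg x), ← _root_.sq_abs x]
    nlinarith [abs_nonneg x, sq_nonneg (|x| - 1),
      mul_nonneg (abs_nonneg x) (sq_nonneg (|x| - 1))]
  have hexp : ∀ c : ℝ, Integrable (fun x : ℝ => Complex.exp (I * ((c * x : ℝ) : ℂ))) μ := by
    intro c
    refine (integrable_const (1 : ℝ)).mono' (Continuous.aestronglyMeasurable (by fun_prop)) ?_
    filter_upwards with x
    simp [Complex.norm_exp]
  set m1 := ∫ x, x ∂μ with hm1
  set m2 := ∫ x : ℝ, x ^ 2 ∂μ with hm2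
  set M3 := ∫ x : ℝ, |x| ^ 3 ∂μ with hM3
  set E1 := ∫ x : ℝ, (Complex.exp (I * ((δ * x : ℝ) : ℂ))
      - (1 + I * ((δ * x : ℝ) : ℂ) - (((δ * x) ^ 2 / 2 : ℝ) : ℂ))) ∂μ with hE1def
  set E2 := ∫ x : ℝ, (Complex.exp (I * ((δ ^ 2 * x : ℝ) : ℂ))
      - (1 + I * ((δ ^ 2 * x : ℝ) : ℂ))) ∂μ with hE2def
  have hIx1 : Integrable (fun x : ℝ => I * ((δ * x : ℝ) : ℂ)) μ :=
    ((hi1.const_mul δ).ofReal).const_mul I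
  have hIx2 : Integrable (fun x : ℝ => I * ((δ ^ 2 * x : ℝ) : ℂ)) μ :=
    ((hi1.const_mul (δ ^ 2)).ofReal).const_mul I
  have hsq' : Integrable (fun x : ℝ => (δ * x) ^ 2 / 2) μ :=
    (hi2.const_mul (δ ^ 2 / 2)).congr (ae_of_all _ fun x => by ring)
  have hsqR : Integrable (fun x : ℝ => (((δ * x) ^ 2 / 2 : ℝ) : ℂ)) μ := hsq'.ofReal
  have hoR1 : ∫ x : ℝ, ((δ * x : ℝ) : ℂ) ∂μ = ((δ * m1 : ℝ) : ℂ) := by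
    rw [show ((δ * m1 : ℝ) : ℂ) = ((∫ x : ℝ, δ * x ∂μ : ℝ) : ℂ) by
      rw [MeasureTheory.integral_const_mul, hm1]]
    exact Complex.ofRealCLM.integral_comp_comm (hi1.const_mul δ)
  have hoR2 : ∫ x : ℝ, ((δ ^ 2 * x : ℝ) : ℂ) ∂μ = ((δ ^ 2 * m1 : ℝ) : ℂ) := by
    rw [show ((δ ^ 2 * m1 : ℝ) : ℂ) = ((∫ x : ℝ, δ ^ 2 * x ∂μ : ℝ) : ℂ) by
      rw [MeasureTheory.integral_const_mul, hm1]]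
    exact Complex.ofRealCLM.integral_comp_comm (hi1.const_mul (δ ^ 2))
  have hoRsq : ∫ x : ℝ, (((δ * x) ^ 2 / 2 : ℝ) : ℂ) ∂μ = ((δ ^ 2 * m2 / 2 : ℝ) : ℂ) := by
    rw [show ((δ ^ 2 * m2 / 2 : ℝ) : ℂ) = ((∫ x : ℝ, (δ * x) ^ 2 / 2 ∂μ : ℝ) : ℂ) by
      rw [show (fun x : ℝ => (δ * x) ^ 2 / 2) = fun x : ℝ => δ ^ 2 / 2 * x ^ 2 from
        funext fun x => by ring, MeasureTheory.integral_const_mul, hm2]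
      push_cast
      ring]
    exact Complex.ofRealCLM.integral_comp_comm hsq'
  have hadd1 : Integrable (fun x : ℝ => (1 : ℂ) + I * ((δ * x : ℝ) : ℂ)) μ :=
    (integrable_const 1).add hIx1
  have hp1 : Integrable (fun x : ℝ => (1 : ℂ) + I * ((δ * x : ℝ) : ℂ)
      - (((δ * x) ^ 2 / 2 : ℝ) : ℂ)) μ := hadd1.sub hsqR
  have hp2 : Integrable (fun x : ℝ => (1 : ℂ) + I * ((δ ^ 2 * x : ℝ) : ℂ)) μ :=
    (integrable_const 1).add hIx2
  have hr1 : Integrable (fun x : ℝ => Complex.exp (I * ((δ * x : ℝ) : ℂ))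
      - (1 + I * ((δ * x : ℝ) : ℂ) - (((δ * x) ^ 2 / 2 : ℝ) : ℂ))) μ := (hexp δ).sub hp1
  have hr2 : Integrable (fun x : ℝ => Complex.exp (I * ((δ ^ 2 * x : ℝ) : ℂ))
      - (1 + I * ((δ ^ 2 * x : ℝ) : ℂ))) μ := (hexp (δ ^ 2)).sub hp2
  have hA : (∫ x : ℝ, Complex.exp (I * ((δ * x : ℝ) : ℂ)) ∂μ)
      = E1 + (1 + I * ((δ * m1 : ℝ) : ℂ) - ((δ ^ 2 * m2 / 2 : ℝ) : ℂ)) := by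
    have hsplit : (∫ x : ℝ, Complex.exp (I * ((δ * x : ℝ) : ℂ)) ∂μ)
        = ∫ x : ℝ, ((Complex.exp (I * ((δ * x : ℝ) : ℂ))
            - (1 + I * ((δ * x : ℝ) : ℂ) - (((δ * x) ^ 2 / 2 : ℝ) : ℂ)))
          + (1 + I * ((δ * x : ℝ) : ℂ) - (((δ * x) ^ 2 / 2 : ℝ) : ℂ))) ∂μ := by
      congr 1; ext x; ring
    rw [hsplit, integral_add hr1 hp1]
    congr 1
    rw [integral_sub hadd1 hsqR,
      integral_add (integrable_const 1) hIx1, MeasureTheory.integral_const,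
      MeasureTheory.integral_const_mul, hoR1, hoRsq]
    simp only [probReal_univ, measure_univ, ENNReal.toReal_one, one_smul]
  have hB : (∫ x : ℝ, Complex.exp (I * ((δ ^ 2 * x : ℝ) : ℂ)) ∂μ)
      = E2 + (1 + I * ((δ ^ 2 * m1 : ℝ) : ℂ)) := by
    have hsplit : (∫ x : ℝ, Complex.exp (I * ((δ ^ 2 * x : ℝ) : ℂ)) ∂μ)
        = ∫ x : ℝ, ((Complex.exp (I * ((δ ^ 2 * x : ℝ) : ℂ))
            - (1 + I * ((δ ^ 2 * x : ℝ) : ℂ))) + (1 + I * ((δ ^ 2 * x : ℝ) : ℂ))) ∂μ := by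
      congr 1; ext x; ring
    rw [hsplit, integral_add hr2 hp2, integral_add (integrable_const 1) hIx2,
      MeasureTheory.integral_const, MeasureTheory.integral_const_mul, hoR2]
    simp only [probReal_univ, measure_univ, ENNReal.toReal_one, one_smul]
    rfl
  have hmain : (2 / (δ : ℂ) ^ 2) * (1 - ∫ x : ℝ, Complex.exp (I * ((δ * x : ℝ) : ℂ)) ∂μ)
        + (2 / (δ : ℂ) ^ 3) *
            ((∫ x : ℝ, Complex.exp (I * ((δ ^ 2 * x : ℝ) : ℂ)) ∂μ) - 1) - ((m2 : ℝ) : ℂ)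
      = -((2 / (δ : ℂ) ^ 2) * E1) + (2 / (δ : ℂ) ^ 3) * E2 := by
    rw [hA, hB]
    push_cast
    field_simp
    ring
  rw [hmain]
  have hE1 : ‖E1‖ ≤ δ ^ 3 / 6 * M3 := by
    rw [hE1def, hM3, ← MeasureTheory.integral_const_mul]
    refine norm_integral_le_of_norm_le (hμ.const_mul (δ ^ 3 / 6)) ?_
    filter_upwards with x
    have h := taylor3_all (δ * x)
    refine h.trans_eq ?_
    rw [abs_mul, _root_.abs_of_pos hδ, mul_pow]
    ring
  have hE2 : ‖E2‖ ≤ δ ^ 4 / 2 * m2 := by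
    rw [hE2def, hm2, ← MeasureTheory.integral_const_mul]
    refine norm_integral_le_of_norm_le (hi2.const_mul (δ ^ 4 / 2)) ?_
    filter_upwards with x
    have h := taylor2_all (δ ^ 2 * x)
    refine h.trans_eq ?_
    ring
  have hm2pos : 0 ≤ m2 := by rw [hm2]; exact integral_nonneg fun x => sq_nonneg x
  have hM3pos : 0 ≤ M3 := by rw [hM3]; exact integral_nonneg fun x => by positivity
  calc ‖-((2 / (δ : ℂ) ^ 2) * E1) + (2 / (δ : ℂ) ^ 3) * E2‖
      ≤ ‖(2 / (δ : ℂ) ^ 2) * E1‖ + ‖(2 / (δ : ℂ) ^ 3) * E2‖ := by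
        refine (norm_add_le _ _).trans_eq ?_; rw [norm_neg]
    _ = (2 / δ ^ 2) * ‖E1‖ + (2 / δ ^ 3) * ‖E2‖ := by
        rw [norm_mul, norm_mul]
        congr 2 <;>
          simp [norm_div, norm_pow, Complex.norm_real, Real.norm_eq_abs, _root_.abs_of_pos hδ]
    _ ≤ (2 / δ ^ 2) * (δ ^ 3 / 6 * M3) + (2 / δ ^ 3) * (δ ^ 4 / 2 * m2) := by
        gcongr <;> positivity
    _ = δ / 3 * M3 + δ * m2 := by field_simp; ring
end
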